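/- Suppose F 0 = 1 and for all a ≥ 1, (a+1)·F a = −∑_{b=0}^{a−1} Ξ b * F (a−1−b), and G 0 = 1 with ∑_{b=0}^{a} G b * F (a−b) = 0 for all a ≥ 1. Then for every a ≥ 1, G a lies in the ℚ-submodule of R spanned by the set of all products Ξ(b₁−1) * Ξ(b₂−1) * ⋯ * Ξ(b_i−1) taken over all i ≥ 1 and all positive integers b₁,…,b_i with b₁+⋯+b_i = a. -/
import Mathlib

def SS {R : Type*} [Ring R] (Ξ : ℕ → R) (a : ℕ) : Set R :=
  {x : R | ∃ l : List ℕ, l ≠ [] ∧ (∀ b ∈ l, 1 ≤ b) ∧ l.sum = a ∧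
    x = (l.map fun b => Ξ (b - 1)).prod}

lemma SS_mul {R : Type*} [Ring R] [Algebra ℚ R] (Ξ : ℕ → R) (m n : ℕ) {x y : R}
    (hx : x ∈ Submodule.span ℚ (SS Ξ m)) (hy : y ∈ Submodule.span ℚ (SS Ξ n)) :
    x * y ∈ Submodule.span ℚ (SS Ξ (m + n)) := by
  have h : Submodule.span ℚ (SS Ξ m) * Submodule.span ℚ (SS Ξ n) ≤
      Submodule.span ℚ (SS Ξ (m + n)) := by
    rw [Submodule.span_mul_span]
    apply Submodule.span_mono
    rintro z ⟨x, ⟨l1, h1, h2, h3, rfl⟩, y, ⟨l2, g1, g2, g3, rfl⟩, rfl⟩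
    refine ⟨l1 ++ l2, by simp [h1], ?_, by simp [h3, g3], by simp⟩
    intro b hb
    rcases List.mem_append.mp hb with h | h
    exacts [h2 b h, g2 b h]
  exact h (Submodule.mul_mem_mul hx hy)

lemma Xi_mem {R : Type*} [Ring R] (Ξ : ℕ → R) (b : ℕ) : Ξ b ∈ SS Ξ (b + 1) :=
  ⟨[b + 1], by simp, by simp, by simp, by simp⟩

theorem stmt3 {R : Type*} [Ring R] [Algebra ℚ R] (Ξ F G : ℕ → R)
    (hF0 : F 0 = 1)
    (hFrec : ∀ a : ℕ, 1 ≤ a →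
      ((a : ℚ) + 1) • F a = -∑ b ∈ Finset.range a, Ξ b * F (a - 1 - b))
    (hG0 : G 0 = 1)
    (hGF : ∀ a : ℕ, 1 ≤ a → ∑ b ∈ Finset.range (a + 1), G b * F (a - b) = 0) :
    ∀ a : ℕ, 1 ≤ a →
      G a ∈ Submodule.span ℚ
        {x : R | ∃ l : List ℕ, l ≠ [] ∧ (∀ b ∈ l, 1 ≤ b) ∧ l.sum = a ∧
          x = (l.map fun b => Ξ (b - 1)).prod} := by
  have hFspan : ∀ a : ℕ, 1 ≤ a → F a ∈ Submodule.span ℚ (SS Ξ a) := by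
    intro a
    induction a using Nat.strong_induction_on with
    | _ a ih =>
      intro ha
      have hne : ((a : ℚ) + 1) ≠ 0 := by positivity
      have hFa : F a = ((a : ℚ) + 1)⁻¹ •
          (-∑ b ∈ Finset.range a, Ξ b * F (a - 1 - b)) := by
        rw [← hFrec a ha, inv_smul_smul₀ hne]
      rw [hFa]
      refine Submodule.smul_mem _ _ (neg_mem (Submodule.sum_mem _ ?_))
      intro b hb
      rw [Finset.mem_range] at hb
      by_cases hba : b = a - 1
      · have h0 : a - 1 - b = 0 := by omega
        rw [h0, hF0, mul_one]
        apply Submodule.subset_span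
        have : b + 1 = a := by omega
        exact this ▸ Xi_mem Ξ b
      · have h1 : 1 ≤ a - 1 - b := by omega
        have h2 : a - 1 - b < a := by omega
        have := SS_mul Ξ (b + 1) (a - 1 - b)
          (Submodule.subset_span (Xi_mem Ξ b)) (ih _ h2 h1)
        have heq : b + 1 + (a - 1 - b) = a := by omega
        rwa [heq] at this
  intro a
  induction a using Nat.strong_induction_on with
  | _ a ih =>
    intro ha
    have hGa : G a = -∑ b ∈ Finset.range a, G b * F (a - b) := by
      have := hGF a ha
      rw [Finset.sum_range_succ, Nat.sub_self, hF0, mul_one] at this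
      exact eq_neg_of_add_eq_zero_right this
    rw [hGa]
    refine neg_mem (Submodule.sum_mem _ ?_)
    intro b hb
    rw [Finset.mem_range] at hb
    by_cases hb0 : b = 0
    · rw [hb0, hG0, one_mul, Nat.sub_zero]
      exact hFspan a ha
    · have h1 : 1 ≤ b := by omega
      have h2 : 1 ≤ a - b := by omega
      have := SS_mul Ξ b (a - b) (ih b hb h1) (hFspan _ h2)
      have heq : b + (a - b) = a := by omega
      rwa [heq] at this
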